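/- Let T be a self-adjoint contraction (‖T‖ ≤ 1) on a complex Hilbert space H, let Ω be a unit vector with T Ω = Ω, let P_Ω be the orthogonal projection onto ℂΩ, and let D be a dense linear subspace of H. Then the following are equivalent: (a) there exists δ > 0 such that e^{δ k} (⟨f, T^k g⟩ − ⟨f, Ω⟩⟨Ω, g⟩) → 0 as k → ∞ for all f, g ∈ D; (b) there exists 0 ≤ α < 1 such that the spectrum of T − P_Ω is contained in [−α, α] (equivalently, ‖T − P_Ω‖ < 1). -/

import Mathlib

open ContinuousLinearMap Filter
open scoped ComplexInnerProductSpace ComplexOrder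

noncomputable section

set_option maxHeartbeats 1000000

/-- Let `T` be a self-adjoint contraction on a complex Hilbert space `H`,
`Ω` a unit vector with `T Ω = Ω`, `P_Ω` the orthogonal projection onto `ℂ Ω`, and `D` a
dense subspace. Then the correlation functions `⟨f, Tᵏ g⟩ − ⟨f, Ω⟩⟨Ω, g⟩` (for `f, g ∈ D`)
decay exponentially iff the spectrum of `T − P_Ω` is contained in some `[−α, α]` with
`α < 1`. -/
theorem exponential_decay_iff_spectral_gap
    {H : Type*} [NormedAddCommGroup H] [InnerProductSpace ℂ H] [CompleteSpace H]
    (T : H →L[ℂ] H) (hT : IsSelfAdjoint T) (hTnorm : ‖T‖ ≤ 1)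
    (Ω : H) (hΩ : ‖Ω‖ = 1) (hfix : T Ω = Ω)
    (Pom : H →L[ℂ] H) (hPom : ∀ f : H, Pom f = ⟪Ω, f⟫ • Ω)
    (D : Submodule ℂ H) (hD : Dense (D : Set H)) :
    (∃ δ : ℝ, 0 < δ ∧ ∀ f ∈ D, ∀ g ∈ D,
        Filter.Tendsto
          (fun k : ℕ => (Real.exp (δ * k) : ℂ) * (⟪f, (T ^ k) g⟫ - ⟪f, Ω⟫ * ⟪Ω, g⟫))
          Filter.atTop (nhds 0)) ↔
    (∃ α : ℝ, 0 ≤ α ∧ α < 1 ∧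
        spectrum ℂ (T - Pom) ⊆ {z : ℂ | z.im = 0 ∧ -α ≤ z.re ∧ z.re ≤ α}) := by
  -- ## Preliminary operator identities
  have hΩ2 : ⟪Ω, Ω⟫ = 1 := by
    rw [inner_self_eq_norm_sq_to_K, hΩ]; norm_num
  have hPsa : IsSelfAdjoint Pom := by
    rw [ContinuousLinearMap.isSelfAdjoint_iff']
    symm
    rw [ContinuousLinearMap.eq_adjoint_iff]
    intro x y
    simp only [hPom, inner_smul_left, inner_smul_right, inner_conj_symm]
    ring
  have hSsa : IsSelfAdjoint (T - Pom) := hT.sub hPsa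
  have hTP : T * Pom = Pom := by
    ext f
    simp [hPom, ContinuousLinearMap.mul_apply, hfix]
  have hPT : Pom * T = Pom := by
    ext f
    have h : ⟪Ω, T f⟫ = ⟪Ω, f⟫ := by
      rw [← ContinuousLinearMap.adjoint_inner_left,
        ContinuousLinearMap.isSelfAdjoint_iff'.mp hT, hfix]
    simp [hPom, ContinuousLinearMap.mul_apply, h]
  have hPP : Pom * Pom = Pom := by
    ext f
    simp [hPom, ContinuousLinearMap.mul_apply, inner_smul_right, hΩ2, hΩ]
  have hTkP : ∀ k : ℕ, T ^ k * Pom = Pom := by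
    intro k
    induction k with
    | zero => simp
    | succ n ih => rw [pow_succ, mul_assoc, hTP, ih]
  have hSk : ∀ k : ℕ, 1 ≤ k → (T - Pom) ^ k = T ^ k - Pom := by
    intro k hk
    induction k with
    | zero => omega
    | succ n ih =>
      rcases Nat.eq_or_lt_of_le hk with h | h
      · simp [← h]
      · have hn : 1 ≤ n := by omega
        rw [pow_succ, ih hn, sub_mul, mul_sub, mul_sub, hTkP, hPT, hPP, ← pow_succ]
        abel
  have hinner : ∀ k : ℕ, 1 ≤ k → ∀ f g : H,
      ⟪f, (T ^ k) g⟫ - ⟪f, Ω⟫ * ⟪Ω, g⟫ = ⟪f, (((T - Pom)) ^ k) g⟫ := by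
    intro k hk f g
    rw [hSk k hk, ContinuousLinearMap.sub_apply, inner_sub_right, hPom,
      inner_smul_right]
    ring
  set S := T - Pom with hSdef
  constructor
  · -- ## Exponential decay implies spectral gap
    rintro ⟨δ, hδ, hdecay⟩
    set α := Real.exp (-δ) with hα
    have hα0 : 0 < α := Real.exp_pos _
    have hα1 : α < 1 := Real.exp_lt_one_iff.mpr (by linarith)
    refine ⟨α, hα0.le, hα1, ?_⟩
    intro z hz
    have him : z.im = 0 := hSsa.im_eq_zero_of_mem_spectrum hz
    set r := z.re with hr
    have hzr : z = (r : ℂ) := hSsa.mem_spectrum_eq_re hz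
    have habs : |r| ≤ α := by
      by_contra hcon
      push_neg at hcon
      have hrspec : r ∈ spectrum ℝ S := by
        apply spectrum.of_algebraMap_mem ℂ
        show (algebraMap ℝ ℂ) r ∈ spectrum ℂ S
        rw [Complex.coe_algebraMap, ← hzr]
        exact hz
      have hd : 0 < |r| - α := by linarith
      set φ : ℝ → ℝ := fun x => min 1 (max 0 ((|x| - α) / (|r| - α))) with hφ
      have hφc : Continuous φ :=
        continuous_const.min (continuous_const.max
          ((continuous_abs.sub continuous_const).div_const _))
      have hφ0 : ∀ x, 0 ≤ φ x := fun x => le_min zero_le_one (le_max_left 0 _)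
      have hφ1 : ∀ x, φ x ≤ 1 := fun x => min_le_left _ _
      have hφr : φ r = 1 := by
        simp [hφ, div_self hd.ne']
      set B := cfc φ S with hB
      have hBsa : IsSelfAdjoint B := cfc_predicate φ S
      have hBnorm : (1 : ℝ) ≤ ‖B‖ := by
        have h := norm_apply_le_norm_cfc φ S hrspec hφc.continuousOn hSsa
        rwa [hφr, norm_one] at h
      -- key quadratic-form estimate
      have hkey : ∀ (k : ℕ) (x : H),
          α ^ (2 * k) * ‖B x‖ ^ 2 ≤ ‖(S ^ k) x‖ ^ 2 := by
        intro k x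
        have hfun : ∀ y ∈ spectrum ℝ S, α ^ (2 * k) * φ y ^ 2 ≤ y ^ (2 * k) := by
          intro y _
          rcases le_or_gt (|y|) α with h | h
          · have hzero : φ y = 0 := by
              have h1 : (|y| - α) / (|r| - α) ≤ 0 :=
                div_nonpos_of_nonpos_of_nonneg (by linarith) hd.le
              simp [hφ, max_eq_left h1]
            rw [hzero]
            have hy : (0:ℝ) ≤ y ^ (2 * k) := by
              rw [pow_mul]; exact pow_nonneg (sq_nonneg y) k
            nlinarith
          · have h1 : α ^ (2 * k) * φ y ^ 2 ≤ α ^ (2 * k) := by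
              have h1a := hφ1 y
              have h1b := hφ0 y
              have hsq : φ y ^ 2 ≤ 1 := by nlinarith
              have h3 : (0:ℝ) ≤ α ^ (2 * k) := pow_nonneg hα0.le _
              exact (mul_le_mul_of_nonneg_left hsq h3).trans_eq (mul_one _)
            have h2 : α ^ (2 * k) ≤ |y| ^ (2 * k) := pow_le_pow_left₀ hα0.le h.le _
            have h3 : |y| ^ (2 * k) = y ^ (2 * k) := by
              rw [← abs_pow, abs_of_nonneg
                (by rw [pow_mul]; exact pow_nonneg (sq_nonneg y) k)]
            linarith
        have hop : (α ^ (2 * k) : ℝ) • (B ^ 2) ≤ S ^ (2 * k) := by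
          have h1 : cfc (fun y : ℝ => α ^ (2 * k) * φ y ^ 2) S
              ≤ cfc (fun y : ℝ => y ^ (2 * k)) S := cfc_mono hfun (hf := (continuous_const.mul (hφc.pow 2)).continuousOn)
                (hg := (continuous_pow (2 * k)).continuousOn)
          rwa [cfc_const_mul _ (fun y => φ y ^ 2) S ((hφc.pow 2).continuousOn),
            cfc_pow φ 2 S hφc.continuousOn, cfc_pow_id S] at h1
        have hP := (ContinuousLinearMap.le_def _ _).mp hop
        have h2 := hP.inner_nonneg_right x
        have hsq : ∀ (A : H →L[ℂ] H), IsSelfAdjoint A →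
            RCLike.re ⟪x, (A * A) x⟫ = ‖A x‖ ^ 2 := by
          intro A hA
          have : ⟪x, (A * A) x⟫ = ⟪A x, A x⟫ := by
            rw [ContinuousLinearMap.mul_apply]
            exact (hA.isSymmetric x (A x)).symm
          rw [this, inner_self_eq_norm_sq]
        have e1 : RCLike.re ⟪x, (S ^ (2 * k)) x⟫ = ‖(S ^ k) x‖ ^ 2 := by
          rw [two_mul, pow_add]
          exact hsq (S ^ k) (hSsa.pow k)
        have e2 : RCLike.re ⟪x, (B ^ 2) x⟫ = ‖B x‖ ^ 2 := by
          rw [pow_two]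
          exact hsq B hBsa
        replace h2 := (RCLike.nonneg_iff.mp h2).1
        rw [ContinuousLinearMap.sub_apply, inner_sub_right, map_sub,
          ContinuousLinearMap.smul_apply] at h2
        rw [RCLike.real_smul_eq_coe_smul (K := ℂ), inner_smul_right] at h2
        rw [RCLike.re_ofReal_mul] at h2
        rw [e1, e2] at h2
        linarith
      -- choose a unit-ish vector where `B` is large, then approximate from `D`
      have hBle : ¬ (‖B‖ ≤ 3/4) := by linarith
      rw [ContinuousLinearMap.opNorm_le_iff (by norm_num)] at hBle
      push_neg at hBle
      obtain ⟨v, hv⟩ := hBle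
      have hv0 : v ≠ 0 := by
        intro h
        rw [h] at hv
        simp at hv
      have hvn : 0 < ‖v‖ := norm_pos_iff.mpr hv0
      set u := (‖v‖⁻¹ : ℝ) • v with hu
      have hBu : 3/4 < ‖B u‖ := by
        rw [hu, ContinuousLinearMap.map_smul_of_tower, norm_smul,
          Real.norm_eq_abs, abs_of_pos (inv_pos.mpr hvn)]
        rw [lt_inv_mul_iff₀ hvn]
        linarith
      have hε : (0 : ℝ) < (4 * (‖B‖ + 1))⁻¹ := by positivity
      obtain ⟨f, hfball, hfD⟩ :=
        (Metric.dense_iff.mp hD u _ hε)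
      have hfu : ‖f - u‖ < (4 * (‖B‖ + 1))⁻¹ := by
        rw [← dist_eq_norm]
        exact Metric.mem_ball.mp hfball
      have hBf : 1/2 ≤ ‖B f‖ := by
        have h1 : ‖B u‖ ≤ ‖B f‖ + ‖B (u - f)‖ := by
          have hfe : f + (u - f) = u := by abel
          calc ‖B u‖ = ‖B f + B (u - f)‖ := by rw [← map_add, hfe]
            _ ≤ ‖B f‖ + ‖B (u - f)‖ := norm_add_le _ _
        have h2 : ‖B (u - f)‖ ≤ ‖B‖ * ‖f - u‖ := by
          rw [show u - f = -(f - u) by abel, map_neg, norm_neg]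
          exact B.le_opNorm _
        have h3 : ‖B‖ * ‖f - u‖ ≤ 1/4 := by
          have h4 : ‖B‖ * ‖f - u‖ ≤ ‖B‖ * (4 * (‖B‖ + 1))⁻¹ :=
            mul_le_mul_of_nonneg_left hfu.le (norm_nonneg B)
          have h5 : ‖B‖ * (4 * (‖B‖ + 1))⁻¹ ≤ 1/4 := by
            rw [mul_inv_le_iff₀ (by positivity)]
            linarith
          linarith
        linarith
      -- derive the contradiction with exponential decay
      have h2k : Tendsto (fun k : ℕ => 2 * k + 2) atTop atTop := by
        have hmono : ∀ k : ℕ, id k ≤ 2 * k + 2 := fun k => by change k ≤ 2 * k + 2; omega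
        exact tendsto_atTop_mono hmono tendsto_id
      have htend : Tendsto
          (fun k : ℕ => ‖(Real.exp (δ * (2 * k + 2 : ℕ)) : ℂ) *
            (⟪f, (T ^ (2 * k + 2 : ℕ)) f⟫ - ⟪f, Ω⟫ * ⟪Ω, f⟫)‖) atTop (nhds 0) := by
        have := ((hdecay f hfD f hfD).comp h2k).norm
        simpa [Function.comp] using this
      have hlow : ∀ k : ℕ, 1/4 ≤ ‖(Real.exp (δ * (2 * k + 2 : ℕ)) : ℂ) *
          (⟪f, (T ^ (2 * k + 2 : ℕ)) f⟫ - ⟪f, Ω⟫ * ⟪Ω, f⟫)‖ := by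
        intro k
        have hm : (2 * k + 2 : ℕ) = 2 * (k + 1) := by ring
        rw [hinner (2 * k + 2) (by omega) f f]
        rw [norm_mul, Complex.norm_real, Real.norm_eq_abs, Real.abs_exp]
        have hre : α ^ (2 * (k + 1)) * ‖B f‖ ^ 2
            ≤ RCLike.re ⟪f, (S ^ (2 * k + 2 : ℕ)) f⟫ := by
          have e1 : RCLike.re ⟪f, (S ^ (2 * (k+1))) f⟫ = ‖(S ^ (k+1)) f‖ ^ 2 := by
            rw [two_mul, pow_add]
            have : ⟪f, ((S ^ (k+1)) * (S ^ (k+1))) f⟫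
                = ⟪(S ^ (k+1)) f, (S ^ (k+1)) f⟫ := by
              rw [ContinuousLinearMap.mul_apply]
              exact ((hSsa.pow (k+1)).isSymmetric f ((S ^ (k+1)) f)).symm
            rw [this, inner_self_eq_norm_sq]
          rw [hm, e1]
          exact (hkey (k+1) f).trans_eq rfl
        have hre2 : RCLike.re ⟪f, (S ^ (2 * k + 2 : ℕ)) f⟫
            ≤ ‖⟪f, (S ^ (2 * k + 2 : ℕ)) f⟫‖ := RCLike.re_le_norm _
        have hBf2 : (1:ℝ)/4 ≤ ‖B f‖ ^ 2 := by nlinarith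
        have hαk : Real.exp (δ * (2 * k + 2 : ℕ)) * α ^ (2 * (k + 1)) = 1 := by
          have hmn : 2 * (k + 1) = 2 * k + 2 := by ring
          rw [hmn, mul_comm δ ((2 * k + 2 : ℕ) : ℝ), Real.exp_nat_mul, hα,
            ← mul_pow, ← Real.exp_add]
          simp
        calc (1:ℝ)/4 = Real.exp (δ * (2 * k + 2 : ℕ)) * (α ^ (2 * (k + 1)) * (1/4)) := by
              rw [← mul_assoc, hαk, one_mul]
          _ ≤ Real.exp (δ * (2 * k + 2 : ℕ)) * (α ^ (2 * (k + 1)) * ‖B f‖ ^ 2) := by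
              apply mul_le_mul_of_nonneg_left _ (Real.exp_nonneg _)
              exact mul_le_mul_of_nonneg_left hBf2 (pow_nonneg hα0.le _)
          _ ≤ Real.exp (δ * (2 * k + 2 : ℕ)) * ‖⟪f, (S ^ (2 * k + 2 : ℕ)) f⟫‖ := by
              apply mul_le_mul_of_nonneg_left _ (Real.exp_nonneg _)
              exact hre.trans hre2
      have hcontra := htend.eventually (eventually_lt_nhds (show (0:ℝ) < 1/4 by norm_num))
      obtain ⟨k, hk⟩ := hcontra.exists
      exact absurd (hlow k) (not_le.mpr hk)
    exact ⟨him, (abs_le.mp habs).1, (abs_le.mp habs).2⟩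
  · -- ## Spectral gap implies exponential decay
    rintro ⟨α, hα0, hα1, hspec⟩
    have hnorm : ‖S‖ ≤ α := by
      have key : ∀ x ∈ spectrum ℝ S, ‖(fun y : ℝ => y) x‖ ≤ α := by
        intro x hx
        have hx' : (algebraMap ℝ ℂ x) ∈ spectrum ℂ S := spectrum.algebraMap_mem ℂ hx
        obtain ⟨-, h1, h2⟩ := hspec hx'
        simp only [Complex.coe_algebraMap, Complex.ofReal_re] at h1 h2
        rw [Real.norm_eq_abs, abs_le]
        exact ⟨by linarith, by linarith⟩
      have h := norm_cfc_le (a := S) hα0 key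
      rwa [cfc_id' (R := ℝ) S] at h
    have hden : (0:ℝ) < α + 1 := by linarith
    refine ⟨Real.log (2 / (α + 1)),
      Real.log_pos (by rw [lt_div_iff₀ hden]; linarith), ?_⟩
    set δ := Real.log (2 / (α + 1)) with hδ
    have hexp : Real.exp δ = 2 / (α + 1) := Real.exp_log (by positivity)
    set q := Real.exp δ * α with hq
    have hq0 : 0 ≤ q := by positivity
    have hq1 : q < 1 := by
      rw [hq, hexp, div_mul_eq_mul_div, div_lt_one hden]; linarith
    intro f _ g _
    apply squeeze_zero_norm' (a := fun k : ℕ => ‖f‖ * ‖g‖ * q ^ k)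
    · filter_upwards [eventually_ge_atTop 1] with k hk
      rw [hinner k hk f g, norm_mul, Complex.norm_real, Real.norm_eq_abs,
        Real.abs_exp]
      calc Real.exp (δ * k) * ‖⟪f, (S ^ k) g⟫‖
          ≤ Real.exp (δ * k) * (‖f‖ * (α ^ k * ‖g‖)) := by
            apply mul_le_mul_of_nonneg_left _ (Real.exp_nonneg _)
            calc ‖⟪f, (S ^ k) g⟫‖ ≤ ‖f‖ * ‖(S ^ k) g‖ := norm_inner_le_norm _ _
              _ ≤ ‖f‖ * (α ^ k * ‖g‖) := by
                  apply mul_le_mul_of_nonneg_left _ (norm_nonneg f)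
                  calc ‖(S ^ k) g‖ ≤ ‖S ^ k‖ * ‖g‖ := (S ^ k).le_opNorm g
                    _ ≤ α ^ k * ‖g‖ := by
                        apply mul_le_mul_of_nonneg_right _ (norm_nonneg g)
                        calc ‖S ^ k‖ ≤ ‖S‖ ^ k := norm_pow_le' S (by omega)
                          _ ≤ α ^ k := pow_le_pow_left₀ (norm_nonneg S) hnorm k
        _ = ‖f‖ * ‖g‖ * q ^ k := by
            rw [mul_comm δ (k:ℝ), Real.exp_nat_mul, hq, mul_pow]
            ring
    · have h := (tendsto_pow_atTop_nhds_zero_of_lt_one hq0 hq1).const_mul (‖f‖ * ‖g‖)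
      simpa using h
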